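/- Let (X, Y) be a pair of real-valued random variables with E[X²] < ∞ and E[Y²] < ∞, let c ∈ [0,1), and suppose that for all a, b ∈ ℝ, P(X ≥ a and Y ≥ b) ≥ c·P(X ≥ a)·P(Y ≥ b). Let α be the pushforward of the Lebesgue measure on ℝ under a ↦ P(X ≥ a) and β the pushforward of the Lebesgue measure under b ↦ P(Y ≥ b). Then Cov(X,Y) ≥ −√(1−c)·K_c(α,β). -/

import Mathlib

open MeasureTheory

/-- The reversal `λ^R` of a Borel measure on `[0,1]`, i.e. the image of `λ` under
`x ↦ 1 − x` (so that `λ^R(E) = λ({1 − x : x ∈ E})`). -/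
noncomputable def revM (lam : Measure (Set.Icc (0 : ℝ) 1)) : Measure (Set.Icc (0 : ℝ) 1) :=
  lam.map (fun x => ⟨1 - x.1,
    Set.mem_Icc.mpr ⟨by linarith [(Set.mem_Icc.mp x.2).2], by linarith [(Set.mem_Icc.mp x.2).1]⟩⟩)

/-- The bilinear functional
`K_c(λ,ν) = ∫∫ min{√(1−c)·xy, (1−x)(1−y)/√(1−c)} dλ(x) dν(y)`, valued in `[0,∞]`.
For `c = 0` this is the functional `K(λ,ν) = ∫∫ min{xy, (1−x)(1−y)} dλ(x) dν(y)`. -/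
noncomputable def Kc (c : ℝ) (lam nu : Measure (Set.Icc (0 : ℝ) 1)) : ENNReal :=
  ∫⁻ x, ∫⁻ y, ENNReal.ofReal (min (Real.sqrt (1 - c) * (x.1 * y.1))
    ((1 - x.1) * (1 - y.1) / Real.sqrt (1 - c))) ∂nu ∂lam

/-- The pushforward of the Lebesgue measure on `ℝ` under `a ↦ P(X ≥ a)`, viewed as a
Borel measure on `[0,1]`. -/
noncomputable def pushCDF {Ω : Type*} [MeasurableSpace Ω] (μ : Measure Ω)
    [IsProbabilityMeasure μ] (X : Ω → ℝ) : Measure (Set.Icc (0 : ℝ) 1) :=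
  Measure.map (fun a : ℝ => (⟨(μ {ω | a ≤ X ω}).toReal,
    Set.mem_Icc.mpr ⟨ENNReal.toReal_nonneg, by
      simpa using ENNReal.toReal_mono (by simp) (prob_le_one (μ := μ))⟩⟩ :
    Set.Icc (0 : ℝ) 1)) volume

namespace Stmt9
open scoped ENNReal

noncomputable def dd (a s t : ℝ) : ℝ := (if a ≤ s then (1:ℝ) else 0) - (if a ≤ t then 1 else 0)

lemma dd_eq_ind {s t : ℝ} (h : t ≤ s) :
    (fun a => dd a s t) = (Set.Ioc t s).indicator (fun _ => (1:ℝ)) := by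
  funext a
  simp only [dd, Set.indicator_apply, Set.mem_Ioc]
  by_cases h1 : a ≤ t
  · have h2 : a ≤ s := le_trans h1 h
    simp [h1, h2, not_lt.mpr h1]
  · by_cases h2 : a ≤ s
    · simp [h1, h2, lt_of_not_ge h1]
    · simp [h1, h2]

lemma dd_neg (a s t : ℝ) : dd a s t = - dd a t s := by simp [dd]

lemma integral_dd (s t : ℝ) : ∫ a, dd a s t = s - t := by
  rcases le_total t s with h | h
  · rw [dd_eq_ind h, integral_indicator_const (1:ℝ) measurableSet_Ioc, Real.volume_real_Ioc_of_le h,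
      smul_eq_mul, mul_one]
  · have : (fun a => dd a s t) = fun a => - dd a t s := by funext a; exact dd_neg a s t
    rw [this, integral_neg, dd_eq_ind h, integral_indicator_const (1:ℝ) measurableSet_Ioc,
      Real.volume_real_Ioc_of_le h, smul_eq_mul, mul_one]
    ring

lemma abs_dd (a s t : ℝ) : |dd a s t| = dd a (max s t) (min s t) := by
  rcases le_total t s with h | h
  · rw [max_eq_left h, min_eq_right h]
    have := dd_eq_ind h
    have h0 : dd a s t = (Set.Ioc t s).indicator (fun _ => (1:ℝ)) a := congrFun this a
    rw [h0, abs_of_nonneg]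
    exact Set.indicator_nonneg (fun _ _ => zero_le_one) a
  · rw [max_eq_right h, min_eq_left h, dd_neg a s t, abs_neg]
    have h0 : dd a t s = (Set.Ioc s t).indicator (fun _ => (1:ℝ)) a := congrFun (dd_eq_ind h) a
    rw [h0, abs_of_nonneg]
    exact Set.indicator_nonneg (fun _ _ => zero_le_one) a

lemma lintegral_abs_dd (s t : ℝ) :
    ∫⁻ a, ENNReal.ofReal |dd a s t| = ENNReal.ofReal |s - t| := by
  have h1 : ∀ a, ENNReal.ofReal |dd a s t|
      = (Set.Ioc (min s t) (max s t)).indicator (fun _ => (1:ℝ≥0∞)) a := by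
    intro a
    rw [abs_dd, congrFun (dd_eq_ind (min_le_max)) a]
    by_cases hmem : a ∈ Set.Ioc (min s t) (max s t) <;> simp [hmem]
  simp_rw [h1]
  rw [lintegral_indicator measurableSet_Ioc _, setLIntegral_const, one_mul, Real.volume_Ioc]
  congr 1
  rw [← max_sub_min_eq_abs, max_comm, min_comm]

section Part2
variable {Ω : Type*} [MeasurableSpace Ω] {μ : Measure Ω}

lemma int_mul {f g : Ω → ℝ} (hf : MemLp f 2 μ) (hg : MemLp g 2 μ) :
    Integrable (fun ω => f ω * g ω) μ := by
  refine (hf.integrable_sq.add hg.integrable_sq).mono'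
    (hf.aestronglyMeasurable.mul hg.aestronglyMeasurable) (ae_of_all _ fun ω => ?_)
  simp only [Real.norm_eq_abs, abs_mul, Pi.add_apply]
  nlinarith [sq_nonneg (|f ω| - |g ω|), sq_abs (f ω), sq_abs (g ω), abs_nonneg (f ω * g ω),
    abs_nonneg (f ω), abs_nonneg (g ω)]

variable [IsProbabilityMeasure μ]

lemma map_fst_eq : Measure.map Prod.fst (μ.prod μ) = μ := by
  rw [Measure.map_fst_prod]; simp

lemma map_snd_eq : Measure.map Prod.snd (μ.prod μ) = μ := by
  rw [Measure.map_snd_prod]; simp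

lemma memLp_fst {f : Ω → ℝ} (hf : MemLp f 2 μ) :
    MemLp (fun q : Ω × Ω => f q.1) 2 (μ.prod μ) := by
  have h : MemLp f 2 (Measure.map Prod.fst (μ.prod μ)) := by rwa [map_fst_eq]
  exact (memLp_map_measure_iff h.aestronglyMeasurable measurable_fst.aemeasurable).mp h

lemma memLp_snd {f : Ω → ℝ} (hf : MemLp f 2 μ) :
    MemLp (fun q : Ω × Ω => f q.2) 2 (μ.prod μ) := by
  have h : MemLp f 2 (Measure.map Prod.snd (μ.prod μ)) := by rwa [map_snd_eq]
  exact (memLp_map_measure_iff h.aestronglyMeasurable measurable_snd.aemeasurable).mp h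

lemma int_ind {p : Ω → Prop} [DecidablePred p] (hs : MeasurableSet {ω | p ω}) :
    ∫ ω, (if p ω then (1:ℝ) else 0) ∂μ = (μ {ω | p ω}).toReal := by
  have h : (fun ω => if p ω then (1:ℝ) else 0) = Set.indicator {ω | p ω} (fun _ => (1:ℝ)) := by
    funext ω; by_cases hp : p ω <;> simp [Set.indicator_apply, hp]
  rw [h, integral_indicator_const (1:ℝ) hs, smul_eq_mul, mul_one]
  rfl

lemma int_comp_fst {f : Ω → ℝ} (hf : AEStronglyMeasurable f μ) :
    ∫ q : Ω × Ω, f q.1 ∂(μ.prod μ) = ∫ ω, f ω ∂μ := by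
  have h : AEStronglyMeasurable f (Measure.map Prod.fst (μ.prod μ)) := by rwa [map_fst_eq]
  have h2 := integral_map (μ := μ.prod μ) measurable_fst.aemeasurable h
  rw [map_fst_eq] at h2
  exact h2.symm

lemma int_comp_snd {f : Ω → ℝ} (hf : AEStronglyMeasurable f μ) :
    ∫ q : Ω × Ω, f q.2 ∂(μ.prod μ) = ∫ ω, f ω ∂μ := by
  have h : AEStronglyMeasurable f (Measure.map Prod.snd (μ.prod μ)) := by rwa [map_snd_eq]
  have h2 := integral_map (μ := μ.prod μ) measurable_snd.aemeasurable h
  rw [map_snd_eq] at h2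
  exact h2.symm

end Part2
section Hoeffding
variable {Ω : Type*} [MeasurableSpace Ω]

lemma hoeffding (μ : Measure Ω) [IsProbabilityMeasure μ]
    (X Y : Ω → ℝ) (hXm : Measurable X) (hYm : Measurable Y)
    (hX : MemLp X 2 μ) (hY : MemLp Y 2 μ) :
    Integrable (fun p : ℝ × ℝ =>
      (μ {ω | p.1 ≤ X ω}).toReal * (μ {ω | p.2 ≤ Y ω}).toReal
        - (μ {ω | p.1 ≤ X ω ∧ p.2 ≤ Y ω}).toReal) (volume.prod volume) ∧
    ∫ p : ℝ × ℝ, ((μ {ω | p.1 ≤ X ω}).toReal * (μ {ω | p.2 ≤ Y ω}).toReal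
        - (μ {ω | p.1 ≤ X ω ∧ p.2 ≤ Y ω}).toReal) ∂(volume.prod volume)
      = (∫ ω, X ω ∂μ) * (∫ ω, Y ω ∂μ) - ∫ ω, X ω * Y ω ∂μ := by
  set H : (Ω × Ω) × (ℝ × ℝ) → ℝ :=
    fun z => dd z.2.1 (X z.1.1) (X z.1.2) * dd z.2.2 (Y z.1.1) (Y z.1.2) with hH
  -- measurability of H
  have hite : ∀ (f : (Ω × Ω) × (ℝ × ℝ) → ℝ) (g : (Ω × Ω) × (ℝ × ℝ) → ℝ),
      Measurable f → Measurable g →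
      Measurable (fun z => if f z ≤ g z then (1:ℝ) else 0) := by
    intro f g hf hg
    exact Measurable.ite (measurableSet_le hf hg) measurable_const measurable_const
  have hHm : Measurable H := by
    apply Measurable.mul
    · exact ((hite _ _ (measurable_fst.comp measurable_snd) (hXm.comp
        (measurable_fst.comp measurable_fst))).sub
        (hite _ _ (measurable_fst.comp measurable_snd) (hXm.comp
        (measurable_snd.comp measurable_fst))))
    · exact ((hite _ _ (measurable_snd.comp measurable_snd) (hYm.comp
        (measurable_fst.comp measurable_fst))).sub
        (hite _ _ (measurable_snd.comp measurable_snd) (hYm.comp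
        (measurable_snd.comp measurable_fst))))
  -- 1D measurablility of dd
  have hddm : ∀ s t : ℝ, Measurable (fun a => dd a s t) := by
    intro s t
    exact (Measurable.ite (measurableSet_le measurable_id measurable_const)
      measurable_const measurable_const).sub
      (Measurable.ite (measurableSet_le measurable_id measurable_const)
      measurable_const measurable_const)
  -- L² memberships
  have hX1 : MemLp (fun q : Ω × Ω => X q.1) 2 (μ.prod μ) := memLp_fst hX
  have hX2 : MemLp (fun q : Ω × Ω => X q.2) 2 (μ.prod μ) := memLp_snd hX
  have hY1 : MemLp (fun q : Ω × Ω => Y q.1) 2 (μ.prod μ) := memLp_fst hY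
  have hY2 : MemLp (fun q : Ω × Ω => Y q.2) 2 (μ.prod μ) := memLp_snd hY
  have hW : Integrable (fun q : Ω × Ω => (X q.1 - X q.2) * (Y q.1 - Y q.2)) (μ.prod μ) :=
    int_mul (hX1.sub hX2) (hY1.sub hY2)
  -- integrability of H
  have hHint : Integrable H ((μ.prod μ).prod (volume.prod volume)) := by
    refine ⟨hHm.aestronglyMeasurable, ?_⟩
    rw [hasFiniteIntegral_iff_norm, lintegral_prod _ (hHm.norm.ennreal_ofReal.aemeasurable)]
    have hinner : ∀ q : Ω × Ω, ∫⁻ p : ℝ × ℝ, ENNReal.ofReal ‖H (q, p)‖ ∂(volume.prod volume)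
        = ENNReal.ofReal ‖(X q.1 - X q.2) * (Y q.1 - Y q.2)‖ := by
      intro q
      have : ∀ p : ℝ × ℝ, ENNReal.ofReal ‖H (q, p)‖
          = ENNReal.ofReal |dd p.1 (X q.1) (X q.2)| * ENNReal.ofReal |dd p.2 (Y q.1) (Y q.2)| := by
        intro p
        rw [hH]
        simp only [Real.norm_eq_abs, abs_mul]
        exact ENNReal.ofReal_mul (abs_nonneg _)
      simp_rw [this]
      rw [lintegral_prod_mul ((hddm _ _).abs.ennreal_ofReal.aemeasurable)
        ((hddm _ _).abs.ennreal_ofReal.aemeasurable), lintegral_abs_dd, lintegral_abs_dd,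
        ← ENNReal.ofReal_mul (abs_nonneg _)]
      simp [Real.norm_eq_abs, abs_mul]
    simp_rw [hinner]
    have := hW.2
    rwa [hasFiniteIntegral_iff_norm] at this
  -- inner integral over p
  have hInner1 : ∀ q : Ω × Ω, ∫ p : ℝ × ℝ, H (q, p) ∂(volume.prod volume)
      = (X q.1 - X q.2) * (Y q.1 - Y q.2) := by
    intro q
    have : (fun p : ℝ × ℝ => H (q, p))
        = fun p : ℝ × ℝ => (fun a => dd a (X q.1) (X q.2)) p.1 * (fun b => dd b (Y q.1) (Y q.2)) p.2 := rfl
    rw [this]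
    have h := integral_prod_mul (μ := (volume : Measure ℝ)) (ν := (volume : Measure ℝ))
      (fun a => dd a (X q.1) (X q.2)) (fun b => dd b (Y q.1) (Y q.2))
    rw [integral_dd, integral_dd] at h
    exact h
  -- inner integral over q
  have hInner2 : ∀ p : ℝ × ℝ, ∫ q, H (q, p) ∂(μ.prod μ)
      = 2 * ((μ {ω | p.1 ≤ X ω ∧ p.2 ≤ Y ω}).toReal
          - (μ {ω | p.1 ≤ X ω}).toReal * (μ {ω | p.2 ≤ Y ω}).toReal) := by
    rintro ⟨a, b⟩
    have hA : MeasurableSet {ω | a ≤ X ω} := measurableSet_le measurable_const hXm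
    have hB : MeasurableSet {ω | b ≤ Y ω} := measurableSet_le measurable_const hYm
    have hAB : MeasurableSet {ω | a ≤ X ω ∧ b ≤ Y ω} := by
      rw [Set.setOf_and]; exact hA.inter hB
    set ia : Ω → ℝ := fun ω => if a ≤ X ω then 1 else 0 with hia
    set ib : Ω → ℝ := fun ω => if b ≤ Y ω then 1 else 0 with hib
    have hiam : Measurable ia := Measurable.ite hA measurable_const measurable_const
    have hibm : Measurable ib := Measurable.ite hB measurable_const measurable_const
    have hexp : ∀ q : Ω × Ω, H (q, (a, b))
        = ia q.1 * ib q.1 - ia q.1 * ib q.2 - ia q.2 * ib q.1 + ia q.2 * ib q.2 := by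
      intro q; rw [hH]; simp only [dd, hia, hib]; ring
    have hbdd : ∀ (f g : (Ω × Ω) → ℝ), Measurable f → Measurable g
        → (∀ z, |f z| ≤ 1) → (∀ z, |g z| ≤ 1) → Integrable (fun q => f q * g q) (μ.prod μ) := by
      intro f g hf hg hf1 hg1
      refine (integrable_const (1:ℝ)).mono' (hf.mul hg).aestronglyMeasurable
        (ae_of_all _ fun q => ?_)
      rw [Real.norm_eq_abs, abs_mul]
      calc |f q| * |g q| ≤ 1 * 1 := by
            exact mul_le_mul (hf1 q) (hg1 q) (abs_nonneg _) zero_le_one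
        _ = 1 := by ring
    have hiabs : ∀ ω, |ia ω| ≤ 1 := by
      intro ω; rw [hia]; dsimp only; split <;> simp
    have hibbs : ∀ ω, |ib ω| ≤ 1 := by
      intro ω; rw [hib]; dsimp only; split <;> simp
    have i11 : Integrable (fun q : Ω × Ω => ia q.1 * ib q.1) (μ.prod μ) :=
      hbdd _ _ (hiam.comp measurable_fst) (hibm.comp measurable_fst)
        (fun z => hiabs z.1) (fun z => hibbs z.1)
    have i12 : Integrable (fun q : Ω × Ω => ia q.1 * ib q.2) (μ.prod μ) :=
      hbdd _ _ (hiam.comp measurable_fst) (hibm.comp measurable_snd)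
        (fun z => hiabs z.1) (fun z => hibbs z.2)
    have i21 : Integrable (fun q : Ω × Ω => ia q.2 * ib q.1) (μ.prod μ) :=
      hbdd _ _ (hiam.comp measurable_snd) (hibm.comp measurable_fst)
        (fun z => hiabs z.2) (fun z => hibbs z.1)
    have i22 : Integrable (fun q : Ω × Ω => ia q.2 * ib q.2) (μ.prod μ) :=
      hbdd _ _ (hiam.comp measurable_snd) (hibm.comp measurable_snd)
        (fun z => hiabs z.2) (fun z => hibbs z.2)
    have hiaint : ∫ ω, ia ω ∂μ = (μ {ω | a ≤ X ω}).toReal := int_ind hA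
    have hibint : ∫ ω, ib ω ∂μ = (μ {ω | b ≤ Y ω}).toReal := int_ind hB
    have hprod_ind : ∀ ω, ia ω * ib ω = if (a ≤ X ω ∧ b ≤ Y ω) then (1:ℝ) else 0 := by
      intro ω; rw [hia, hib]; dsimp only
      by_cases h1 : a ≤ X ω <;> by_cases h2 : b ≤ Y ω <;> simp [h1, h2]
    have v11 : ∫ q : Ω × Ω, ia q.1 * ib q.1 ∂(μ.prod μ) = (μ {ω | a ≤ X ω ∧ b ≤ Y ω}).toReal := by
      rw [show (fun q : Ω × Ω => ia q.1 * ib q.1) = (fun q : Ω × Ω => (fun ω => ia ω * ib ω) q.1)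
        from rfl, int_comp_fst (f := fun ω => ia ω * ib ω) (hiam.mul hibm).aestronglyMeasurable]
      simp_rw [hprod_ind]
      exact int_ind hAB
    have v22 : ∫ q : Ω × Ω, ia q.2 * ib q.2 ∂(μ.prod μ) = (μ {ω | a ≤ X ω ∧ b ≤ Y ω}).toReal := by
      rw [show (fun q : Ω × Ω => ia q.2 * ib q.2) = (fun q : Ω × Ω => (fun ω => ia ω * ib ω) q.2)
        from rfl, int_comp_snd (f := fun ω => ia ω * ib ω) (hiam.mul hibm).aestronglyMeasurable]
      simp_rw [hprod_ind]
      exact int_ind hAB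
    have v12 : ∫ q : Ω × Ω, ia q.1 * ib q.2 ∂(μ.prod μ)
        = (μ {ω | a ≤ X ω}).toReal * (μ {ω | b ≤ Y ω}).toReal := by
      have h := integral_prod_mul (μ := μ) (ν := μ) ia ib
      rw [hiaint, hibint] at h
      exact h
    have v21 : ∫ q : Ω × Ω, ia q.2 * ib q.1 ∂(μ.prod μ)
        = (μ {ω | a ≤ X ω}).toReal * (μ {ω | b ≤ Y ω}).toReal := by
      have : (fun q : Ω × Ω => ia q.2 * ib q.1) = fun q : Ω × Ω => ib q.1 * ia q.2 := by
        funext q; ring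
      rw [this]
      have h := integral_prod_mul (μ := μ) (ν := μ) ib ia
      rw [hiaint, hibint] at h
      exact h.trans (mul_comm _ _)
    calc ∫ q, H (q, (a, b)) ∂(μ.prod μ)
        = ∫ q : Ω × Ω, (ia q.1 * ib q.1 - ia q.1 * ib q.2 - ia q.2 * ib q.1 + ia q.2 * ib q.2) ∂(μ.prod μ) := by
          exact integral_congr_ae (ae_of_all _ hexp)
      _ = ((∫ q : Ω × Ω, ia q.1 * ib q.1 ∂(μ.prod μ)) - ∫ q : Ω × Ω, ia q.1 * ib q.2 ∂(μ.prod μ))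
            - (∫ q : Ω × Ω, ia q.2 * ib q.1 ∂(μ.prod μ)) + ∫ q : Ω × Ω, ia q.2 * ib q.2 ∂(μ.prod μ) := by
          have j1 : Integrable (fun q : Ω × Ω =>
              ia q.1 * ib q.1 - ia q.1 * ib q.2 - ia q.2 * ib q.1) (μ.prod μ) :=
            (i11.sub i12).sub i21
          have j2 : Integrable (fun q : Ω × Ω =>
              ia q.1 * ib q.1 - ia q.1 * ib q.2) (μ.prod μ) := i11.sub i12
          rw [integral_add j1 i22, integral_sub j2 i21, integral_sub i11 i12]
      _ = 2 * ((μ {ω | a ≤ X ω ∧ b ≤ Y ω}).toReal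
          - (μ {ω | a ≤ X ω}).toReal * (μ {ω | b ≤ Y ω}).toReal) := by
          rw [v11, v12, v21, v22]; ring
  -- value of ∫(μ.prod μ) (X1-X2)(Y1-Y2)
  have hC : ∫ q : Ω × Ω, (X q.1 - X q.2) * (Y q.1 - Y q.2) ∂(μ.prod μ)
      = 2 * ((∫ ω, X ω * Y ω ∂μ) - (∫ ω, X ω ∂μ) * (∫ ω, Y ω ∂μ)) := by
    have hexp : ∀ q : Ω × Ω, (X q.1 - X q.2) * (Y q.1 - Y q.2)
        = X q.1 * Y q.1 - X q.1 * Y q.2 - X q.2 * Y q.1 + X q.2 * Y q.2 := by intro q; ring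
    have i11 : Integrable (fun q : Ω × Ω => X q.1 * Y q.1) (μ.prod μ) := int_mul hX1 hY1
    have i12 : Integrable (fun q : Ω × Ω => X q.1 * Y q.2) (μ.prod μ) := int_mul hX1 hY2
    have i21 : Integrable (fun q : Ω × Ω => X q.2 * Y q.1) (μ.prod μ) := int_mul hX2 hY1
    have i22 : Integrable (fun q : Ω × Ω => X q.2 * Y q.2) (μ.prod μ) := int_mul hX2 hY2
    have v11 : ∫ q : Ω × Ω, X q.1 * Y q.1 ∂(μ.prod μ) = ∫ ω, X ω * Y ω ∂μ := by
      rw [show (fun q : Ω × Ω => X q.1 * Y q.1) = (fun q : Ω × Ω => (fun ω => X ω * Y ω) q.1)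
        from rfl, int_comp_fst (f := fun ω => X ω * Y ω) (hXm.mul hYm).aestronglyMeasurable]
    have v22 : ∫ q : Ω × Ω, X q.2 * Y q.2 ∂(μ.prod μ) = ∫ ω, X ω * Y ω ∂μ := by
      rw [show (fun q : Ω × Ω => X q.2 * Y q.2) = (fun q : Ω × Ω => (fun ω => X ω * Y ω) q.2)
        from rfl, int_comp_snd (f := fun ω => X ω * Y ω) (hXm.mul hYm).aestronglyMeasurable]
    have v12 : ∫ q : Ω × Ω, X q.1 * Y q.2 ∂(μ.prod μ) = (∫ ω, X ω ∂μ) * ∫ ω, Y ω ∂μ :=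
      integral_prod_mul X Y
    have v21 : ∫ q : Ω × Ω, X q.2 * Y q.1 ∂(μ.prod μ) = (∫ ω, X ω ∂μ) * ∫ ω, Y ω ∂μ := by
      have : (fun q : Ω × Ω => X q.2 * Y q.1) = fun q : Ω × Ω => Y q.1 * X q.2 := by
        funext q; ring
      rw [this]
      exact (integral_prod_mul Y X).trans (mul_comm _ _)
    calc ∫ q : Ω × Ω, (X q.1 - X q.2) * (Y q.1 - Y q.2) ∂(μ.prod μ)
        = ∫ q : Ω × Ω, (X q.1 * Y q.1 - X q.1 * Y q.2 - X q.2 * Y q.1 + X q.2 * Y q.2) ∂(μ.prod μ) :=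
          integral_congr_ae (ae_of_all _ hexp)
      _ = ((∫ q : Ω × Ω, X q.1 * Y q.1 ∂(μ.prod μ)) - ∫ q : Ω × Ω, X q.1 * Y q.2 ∂(μ.prod μ))
            - (∫ q : Ω × Ω, X q.2 * Y q.1 ∂(μ.prod μ)) + ∫ q : Ω × Ω, X q.2 * Y q.2 ∂(μ.prod μ) := by
          have j1 : Integrable (fun q : Ω × Ω =>
              X q.1 * Y q.1 - X q.1 * Y q.2 - X q.2 * Y q.1) (μ.prod μ) :=
            (i11.sub i12).sub i21
          have j2 : Integrable (fun q : Ω × Ω =>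
              X q.1 * Y q.1 - X q.1 * Y q.2) (μ.prod μ) := i11.sub i12
          rw [integral_add j1 i22, integral_sub j2 i21, integral_sub i11 i12]
      _ = 2 * ((∫ ω, X ω * Y ω ∂μ) - (∫ ω, X ω ∂μ) * (∫ ω, Y ω ∂μ)) := by
          rw [v11, v12, v21, v22]; ring
  -- swap
  have hswap : ∫ q, ∫ p, H (q, p) ∂(volume.prod volume) ∂(μ.prod μ)
      = ∫ p, ∫ q, H (q, p) ∂(μ.prod μ) ∂(volume.prod volume) :=
    integral_integral_swap hHint
  -- integrability of marginal
  have hmarg : Integrable (fun p : ℝ × ℝ => ∫ q, H (q, p) ∂(μ.prod μ)) (volume.prod volume) := by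
    have hs : Integrable (H ∘ Prod.swap) ((volume.prod volume).prod (μ.prod μ)) := hHint.swap
    have := hs.integral_prod_left
    exact this
  have hg_int : Integrable (fun p : ℝ × ℝ =>
      (μ {ω | p.1 ≤ X ω}).toReal * (μ {ω | p.2 ≤ Y ω}).toReal
        - (μ {ω | p.1 ≤ X ω ∧ p.2 ≤ Y ω}).toReal) (volume.prod volume) := by
    refine ((hmarg.const_mul (-(1/2) : ℝ)).congr (ae_of_all _ fun p => ?_))
    show -(1/2) * (∫ q, H (q, p) ∂(μ.prod μ)) = _
    rw [hInner2 p]; ring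
  refine ⟨hg_int, ?_⟩
  -- compute the integral
  have h1 : ∫ q, ∫ p, H (q, p) ∂(volume.prod volume) ∂(μ.prod μ)
      = 2 * ((∫ ω, X ω * Y ω ∂μ) - (∫ ω, X ω ∂μ) * (∫ ω, Y ω ∂μ)) := by
    rw [integral_congr_ae (ae_of_all _ hInner1), hC]
  have h2 : ∫ p, ∫ q, H (q, p) ∂(μ.prod μ) ∂(volume.prod volume)
      = -2 * ∫ p : ℝ × ℝ, ((μ {ω | p.1 ≤ X ω}).toReal * (μ {ω | p.2 ≤ Y ω}).toReal
        - (μ {ω | p.1 ≤ X ω ∧ p.2 ≤ Y ω}).toReal) ∂(volume.prod volume) := by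
    have h2' : ∀ p : ℝ × ℝ, ∫ q, H (q, p) ∂(μ.prod μ)
        = -2 * ((μ {ω | p.1 ≤ X ω}).toReal * (μ {ω | p.2 ≤ Y ω}).toReal
          - (μ {ω | p.1 ≤ X ω ∧ p.2 ≤ Y ω}).toReal) := by
      intro p; rw [hInner2 p]; ring
    rw [integral_congr_ae (ae_of_all _ h2')]
    exact integral_const_mul (-2 : ℝ) (fun p : ℝ × ℝ =>
      (μ {ω | p.1 ≤ X ω}).toReal * (μ {ω | p.2 ≤ Y ω}).toReal
        - (μ {ω | p.1 ≤ X ω ∧ p.2 ≤ Y ω}).toReal)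
  rw [h1, h2] at hswap
  linarith
end Hoeffding
section Main
variable {Ω : Type*} [MeasurableSpace Ω]

lemma ofReal_max_zero (t : ℝ) : ENNReal.ofReal (max t 0) = ENNReal.ofReal t := by
  rcases le_total t 0 with h | h
  · rw [max_eq_right h, ENNReal.ofReal_zero, ENNReal.ofReal_eq_zero.mpr h]
  · rw [max_eq_left h]

lemma toReal_prob_le_one {μ : Measure Ω} [IsProbabilityMeasure μ] (s : Set Ω) :
    (μ s).toReal ≤ 1 := by
  have := ENNReal.toReal_mono (by simp) (prob_le_one (μ := μ) (s := s))
  simpa using this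

lemma main_meas (μ : Measure Ω) [IsProbabilityMeasure μ] (X Y : Ω → ℝ)
    (hXm : Measurable X) (hYm : Measurable Y) (hX : MemLp X 2 μ) (hY : MemLp Y 2 μ)
    (c : ℝ) (hc0 : 0 ≤ c) (hc1 : c < 1)
    (hcond : ∀ a b : ℝ,
      c * (μ {ω | a ≤ X ω}).toReal * (μ {ω | b ≤ Y ω}).toReal ≤
        (μ {ω | a ≤ X ω ∧ b ≤ Y ω}).toReal) :
    ENNReal.ofReal (-((∫ ω, X ω * Y ω ∂μ) - (∫ ω, X ω ∂μ) * (∫ ω, Y ω ∂μ))) ≤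
      ENNReal.ofReal (Real.sqrt (1 - c)) * Kc c (pushCDF μ X) (pushCDF μ Y) := by
  set r := Real.sqrt (1 - c) with hr
  have hr0 : 0 < r := Real.sqrt_pos.mpr (by linarith)
  have hrr : r * r = 1 - c := Real.mul_self_sqrt (by linarith)
  have hrne : ENNReal.ofReal r ≠ ⊤ := ENNReal.ofReal_ne_top
  have hxmono : Antitone (fun a : ℝ => (μ {ω | a ≤ X ω}).toReal) := by
    intro a1 a2 h12
    exact ENNReal.toReal_mono (measure_ne_top μ _)
      (measure_mono (fun ω hω => le_trans h12 hω))
  have hymono : Antitone (fun b : ℝ => (μ {ω | b ≤ Y ω}).toReal) := by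
    intro b1 b2 h12
    exact ENNReal.toReal_mono (measure_ne_top μ _)
      (measure_mono (fun ω hω => le_trans h12 hω))
  have hxm : Measurable (fun a : ℝ => (μ {ω | a ≤ X ω}).toReal) := hxmono.measurable
  have hym : Measurable (fun b : ℝ => (μ {ω | b ≤ Y ω}).toReal) := hymono.measurable
  obtain ⟨hg_int, hg_val⟩ := hoeffding μ X Y hXm hYm hX hY
  -- pointwise bound
  have hbound : ∀ p : ℝ × ℝ,
      (μ {ω | p.1 ≤ X ω}).toReal * (μ {ω | p.2 ≤ Y ω}).toReal
          - (μ {ω | p.1 ≤ X ω ∧ p.2 ≤ Y ω}).toReal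
        ≤ min ((1 - c) * ((μ {ω | p.1 ≤ X ω}).toReal * (μ {ω | p.2 ≤ Y ω}).toReal))
            ((1 - (μ {ω | p.1 ≤ X ω}).toReal) * (1 - (μ {ω | p.2 ≤ Y ω}).toReal)) := by
    rintro ⟨a, b⟩
    have hB : MeasurableSet {ω | b ≤ Y ω} := measurableSet_le measurable_const hYm
    refine le_min ?_ ?_
    · have h := hcond a b
      have h2 : (1 - c) * ((μ {ω | a ≤ X ω}).toReal * (μ {ω | b ≤ Y ω}).toReal)
          = (μ {ω | a ≤ X ω}).toReal * (μ {ω | b ≤ Y ω}).toReal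
            - c * (μ {ω | a ≤ X ω}).toReal * (μ {ω | b ≤ Y ω}).toReal := by ring
      simp only []
      linarith
    · have hU := measure_union_add_inter (μ := μ) {ω | a ≤ X ω} hB
      have hset : {ω | a ≤ X ω ∧ b ≤ Y ω} = {ω | a ≤ X ω} ∩ {ω | b ≤ Y ω} := Set.setOf_and
      have h1 : (μ ({ω | a ≤ X ω} ∪ {ω | b ≤ Y ω})).toReal
          + (μ ({ω | a ≤ X ω} ∩ {ω | b ≤ Y ω})).toReal
          = (μ {ω | a ≤ X ω}).toReal + (μ {ω | b ≤ Y ω}).toReal := by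
        rw [← ENNReal.toReal_add (measure_ne_top μ _) (measure_ne_top μ _),
          ← ENNReal.toReal_add (measure_ne_top μ _) (measure_ne_top μ _), hU]
      have h2 : (μ ({ω | a ≤ X ω} ∪ {ω | b ≤ Y ω})).toReal ≤ 1 := toReal_prob_le_one _
      simp only []
      rw [hset]
      nlinarith [h1, h2]
  -- RHS computation
  have hstep1 : ∀ u : Set.Icc (0:ℝ) 1,
      ∫⁻ v, ENNReal.ofReal (min (r * (u.1 * v.1)) ((1 - u.1) * (1 - v.1) / r)) ∂(pushCDF μ Y)
        = ∫⁻ b, ENNReal.ofReal (min (r * (u.1 * (μ {ω | b ≤ Y ω}).toReal))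
            ((1 - u.1) * (1 - (μ {ω | b ≤ Y ω}).toReal) / r)) ∂volume := by
    intro u
    rw [pushCDF]
    exact lintegral_map
      (((measurable_const.mul (measurable_const.mul measurable_subtype_coe)).min
        ((measurable_const.mul (measurable_const.sub measurable_subtype_coe)).div_const r)).ennreal_ofReal)
      (Measurable.subtype_mk hym)
  have hKeq : Kc c (pushCDF μ X) (pushCDF μ Y)
      = ∫⁻ a, ∫⁻ b, ENNReal.ofReal (min (r * ((μ {ω | a ≤ X ω}).toReal * (μ {ω | b ≤ Y ω}).toReal))
          ((1 - (μ {ω | a ≤ X ω}).toReal) * (1 - (μ {ω | b ≤ Y ω}).toReal) / r)) ∂volume ∂volume := by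
    rw [Kc]
    rw [lintegral_congr hstep1]
    rw [pushCDF]
    refine lintegral_map ?_ (Measurable.subtype_mk hxm)
    refine Measurable.lintegral_prod_right ?_
    refine Measurable.ennreal_ofReal ?_
    refine Measurable.min ?_ ?_
    · exact measurable_const.mul ((measurable_subtype_coe.comp measurable_fst).mul
        (hym.comp measurable_snd))
    · exact ((measurable_const.sub (measurable_subtype_coe.comp measurable_fst)).mul
        (measurable_const.sub (hym.comp measurable_snd))).div_const r
  have hmulK : ENNReal.ofReal r * Kc c (pushCDF μ X) (pushCDF μ Y)
      = ∫⁻ a, ∫⁻ b, ENNReal.ofReal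
          (min ((1 - c) * ((μ {ω | a ≤ X ω}).toReal * (μ {ω | b ≤ Y ω}).toReal))
            ((1 - (μ {ω | a ≤ X ω}).toReal) * (1 - (μ {ω | b ≤ Y ω}).toReal))) ∂volume ∂volume := by
    rw [hKeq, ← lintegral_const_mul' _ _ hrne]
    refine lintegral_congr fun a => ?_
    rw [← lintegral_const_mul' _ _ hrne]
    refine lintegral_congr fun b => ?_
    rw [← ENNReal.ofReal_mul hr0.le]
    congr 1
    rw [mul_min_of_nonneg _ _ hr0.le]
    congr 1
    · rw [← mul_assoc, hrr]
    · rw [mul_comm, div_mul_cancel₀ _ hr0.ne']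
  -- main chain
  calc ENNReal.ofReal (-((∫ ω, X ω * Y ω ∂μ) - (∫ ω, X ω ∂μ) * (∫ ω, Y ω ∂μ)))
      = ENNReal.ofReal (∫ p : ℝ × ℝ, ((μ {ω | p.1 ≤ X ω}).toReal * (μ {ω | p.2 ≤ Y ω}).toReal
          - (μ {ω | p.1 ≤ X ω ∧ p.2 ≤ Y ω}).toReal) ∂(volume.prod volume)) := by
        rw [neg_sub, ← hg_val]
    _ ≤ ENNReal.ofReal (∫ p : ℝ × ℝ, max ((μ {ω | p.1 ≤ X ω}).toReal * (μ {ω | p.2 ≤ Y ω}).toReal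
          - (μ {ω | p.1 ≤ X ω ∧ p.2 ≤ Y ω}).toReal) 0 ∂(volume.prod volume)) := by
        exact ENNReal.ofReal_le_ofReal (integral_mono hg_int hg_int.pos_part
          (fun p => le_max_left _ _))
    _ = ∫⁻ p : ℝ × ℝ, ENNReal.ofReal (max ((μ {ω | p.1 ≤ X ω}).toReal * (μ {ω | p.2 ≤ Y ω}).toReal
          - (μ {ω | p.1 ≤ X ω ∧ p.2 ≤ Y ω}).toReal) 0) ∂(volume.prod volume) :=
        ofReal_integral_eq_lintegral_ofReal hg_int.pos_part
          (ae_of_all _ fun p => le_max_right _ _)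
    _ = ∫⁻ p : ℝ × ℝ, ENNReal.ofReal ((μ {ω | p.1 ≤ X ω}).toReal * (μ {ω | p.2 ≤ Y ω}).toReal
          - (μ {ω | p.1 ≤ X ω ∧ p.2 ≤ Y ω}).toReal) ∂(volume.prod volume) :=
        lintegral_congr fun p => ofReal_max_zero _
    _ ≤ ∫⁻ p : ℝ × ℝ, ENNReal.ofReal
          (min ((1 - c) * ((μ {ω | p.1 ≤ X ω}).toReal * (μ {ω | p.2 ≤ Y ω}).toReal))
            ((1 - (μ {ω | p.1 ≤ X ω}).toReal) * (1 - (μ {ω | p.2 ≤ Y ω}).toReal)))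
          ∂(volume.prod volume) :=
        lintegral_mono fun p => ENNReal.ofReal_le_ofReal (hbound p)
    _ = ∫⁻ a, ∫⁻ b, ENNReal.ofReal
          (min ((1 - c) * ((μ {ω | a ≤ X ω}).toReal * (μ {ω | b ≤ Y ω}).toReal))
            ((1 - (μ {ω | a ≤ X ω}).toReal) * (1 - (μ {ω | b ≤ Y ω}).toReal))) ∂volume ∂volume := by
        refine lintegral_prod _ ?_
        refine Measurable.aemeasurable (Measurable.ennreal_ofReal (Measurable.min ?_ ?_))
        · exact measurable_const.mul ((hxm.comp measurable_fst).mul (hym.comp measurable_snd))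
        · exact (measurable_const.sub (hxm.comp measurable_fst)).mul
            (measurable_const.sub (hym.comp measurable_snd))
    _ = ENNReal.ofReal r * Kc c (pushCDF μ X) (pushCDF μ Y) := hmulK.symm

end Main
end Stmt9

/-- Proposition 2.10: under the FKG-type condition,
`Cov(X,Y) ≥ −√(1−c)·K_c(α,β)`; stated in `[0,∞]` as
`ofReal(−Cov(X,Y)) ≤ ofReal(√(1−c))·K_c(α,β)`. -/
theorem stmt_9 {Ω : Type*} [MeasurableSpace Ω] (μ : Measure Ω) [IsProbabilityMeasure μ]
    (X Y : Ω → ℝ) (hX : MemLp X 2 μ) (hY : MemLp Y 2 μ)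
    (c : ℝ) (hc0 : 0 ≤ c) (hc1 : c < 1)
    (hcond : ∀ a b : ℝ,
      c * (μ {ω | a ≤ X ω}).toReal * (μ {ω | b ≤ Y ω}).toReal ≤
        (μ {ω | a ≤ X ω ∧ b ≤ Y ω}).toReal) :
    ENNReal.ofReal (-((∫ ω, X ω * Y ω ∂μ) - (∫ ω, X ω ∂μ) * (∫ ω, Y ω ∂μ))) ≤
      ENNReal.ofReal (Real.sqrt (1 - c)) * Kc c (pushCDF μ X) (pushCDF μ Y) := by
  obtain ⟨X', hX'm, hXX'⟩ : ∃ X' : Ω → ℝ, Measurable X' ∧ X =ᵐ[μ] X' :=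
    ⟨hX.1.mk X, hX.1.stronglyMeasurable_mk.measurable, hX.1.ae_eq_mk⟩
  obtain ⟨Y', hY'm, hYY'⟩ : ∃ Y' : Ω → ℝ, Measurable Y' ∧ Y =ᵐ[μ] Y' :=
    ⟨hY.1.mk Y, hY.1.stronglyMeasurable_mk.measurable, hY.1.ae_eq_mk⟩
  have hsetX : ∀ a : ℝ, μ {ω | a ≤ X ω} = μ {ω | a ≤ X' ω} := by
    intro a
    refine measure_congr ?_
    filter_upwards [hXX'] with ω h
    change (a ≤ X ω) = (a ≤ X' ω)
    rw [h]
  have hsetY : ∀ b : ℝ, μ {ω | b ≤ Y ω} = μ {ω | b ≤ Y' ω} := by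
    intro b
    refine measure_congr ?_
    filter_upwards [hYY'] with ω h
    change (b ≤ Y ω) = (b ≤ Y' ω)
    rw [h]
  have hsetXY : ∀ a b : ℝ, μ {ω | a ≤ X ω ∧ b ≤ Y ω} = μ {ω | a ≤ X' ω ∧ b ≤ Y' ω} := by
    intro a b
    refine measure_congr ?_
    filter_upwards [hXX', hYY'] with ω h1 h2
    change (a ≤ X ω ∧ b ≤ Y ω) = (a ≤ X' ω ∧ b ≤ Y' ω)
    rw [h1, h2]
  have hpushX : pushCDF μ X = pushCDF μ X' := by
    unfold pushCDF
    congr 1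
    funext a
    exact Subtype.ext (congrArg ENNReal.toReal (hsetX a))
  have hpushY : pushCDF μ Y = pushCDF μ Y' := by
    unfold pushCDF
    congr 1
    funext b
    exact Subtype.ext (congrArg ENNReal.toReal (hsetY b))
  have hEX : ∫ ω, X ω ∂μ = ∫ ω, X' ω ∂μ := integral_congr_ae hXX'
  have hEY : ∫ ω, Y ω ∂μ = ∫ ω, Y' ω ∂μ := integral_congr_ae hYY'
  have hEXY : ∫ ω, X ω * Y ω ∂μ = ∫ ω, X' ω * Y' ω ∂μ := integral_congr_ae (hXX'.mul hYY')
  rw [hEX, hEY, hEXY, hpushX, hpushY]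
  exact Stmt9.main_meas μ X' Y' hX'm hY'm (hX.ae_eq hXX') (hY.ae_eq hYY') c hc0 hc1
    (fun a b => by rw [← hsetX a, ← hsetY b, ← hsetXY a b]; exact hcond a b)
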